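/- Let X be a Hausdorff topological space with basepoint x₀ and let X̃ be the set of fixed-endpoint homotopy classes of paths starting at x₀ with the whisker topology. Then X̃ is Hausdorff if and only if X is homotopically Hausdorff (for every x ∈ X, the intersection over neighborhoods U of x of the images of π₁(U, x) in π₁(X, x) is trivial), assuming X is path connected. -/

import Mathlib

open Set

variable {X : Type*} [TopologicalSpace X]

/-- The star of a point `x` with respect to a cover: the union of all members containing `x`. -/
def ptStar (𝒞 : Set (Set X)) (x : X) : Set X := ⋃₀ {C ∈ 𝒞 | x ∈ C}

/-- The star `St(W, 𝒞)` of a set `W`: the union of all members of `𝒞` meeting `W`. -/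
def setStar (𝒞 : Set (Set X)) (W : Set X) : Set X := ⋃₀ {C ∈ 𝒞 | (C ∩ W).Nonempty}

/-- The cover `St(𝒞) = {St(C, 𝒞) : C ∈ 𝒞}`. -/
def starCover (𝒞 : Set (Set X)) : Set (Set X) := setStar 𝒞 '' 𝒞

/-- `𝒱` refines `𝒰`: every member of `𝒱` is contained in some member of `𝒰`. -/
def Refines (𝒱 𝒰 : Set (Set X)) : Prop := ∀ V ∈ 𝒱, ∃ U ∈ 𝒰, V ⊆ U

/-- An open cover of `X`. -/
def IsOpenCover (𝒰 : Set (Set X)) : Prop := (∀ U ∈ 𝒰, IsOpen U) ∧ ⋃₀ 𝒰 = univ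

/-- `𝒱` star refines `𝒰`: the cover of point stars of `𝒱` refines `𝒰`. -/
def StarRefines (𝒱 𝒰 : Set (Set X)) : Prop := ∀ x : X, ∃ U ∈ 𝒰, ptStar 𝒱 x ⊆ U

open CategoryTheory in
/-- The image of `π₁(U, x)` in `π₁(X, x)` induced by the inclusion `U → X`. -/
noncomputable def imageSubgroup (U : Set X) (x : X) (hx : x ∈ U) :
    Subgroup (FundamentalGroup X x) :=
  MonoidHom.range
    (show FundamentalGroup U ⟨x, hx⟩ →* FundamentalGroup X x from
      Functor.mapEnd (FundamentalGroupoid.mk (⟨x, hx⟩ : U))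
        (FundamentalGroupoid.fundamentalGroupoidFunctor.map
          (X := TopCat.of U) (Y := TopCat.of X)
          (TopCat.ofHom ⟨Subtype.val, continuous_subtype_val⟩)))

/-- The set `X̃` of fixed endpoint homotopy classes of paths in `X` starting at `x₀`. -/
def PathSpace (X : Type*) [TopologicalSpace X] (x₀ : X) :=
  Σ y : X, Path.Homotopic.Quotient x₀ y

/-- The basic set `B([α], U)`: all classes `[β]` such that `α⁻¹·β` is fixed endpoint homotopic
to a path in `U`; equivalently `[β] = [α]·[γ]` for some path `γ` contained in `U`. -/
def whiskerBall {x₀ : X} (p : PathSpace X x₀) (U : Set X) : Set (PathSpace X x₀) :=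
  {q | ∃ γ : Path p.1 q.1, Set.range γ ⊆ U ∧ q.2 = Path.Homotopic.Quotient.trans p.2 (Quotient.mk (Path.Homotopic.setoid _ _) γ)}

/-- The whisker topology on `X̃`, generated by the basic sets `B([α], U)`. -/
def whiskerTopology (x₀ : X) : TopologicalSpace (PathSpace X x₀) :=
  TopologicalSpace.generateFrom
    {S | ∃ (p : PathSpace X x₀) (U : Set X), IsOpen U ∧ p.1 ∈ U ∧ S = whiskerBall p U}


section Helpers
open CategoryTheory
attribute [local instance] Path.Homotopic.setoid

/-- A path homotopy class as a morphism in the fundamental groupoid. -/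
def toHom {a b : X} (p : Path.Homotopic.Quotient a b) :
    FundamentalGroupoid.mk a ⟶ FundamentalGroupoid.mk b := p

lemma toHom_comp {a b c : X} (p : Path.Homotopic.Quotient a b) (q : Path.Homotopic.Quotient b c) :
    toHom (p.trans q) = toHom p ≫ toHom q := rfl

lemma comp_lift' {a b c : X} (γ : Path a b) (δ : Path b c) :
    (⟦γ.trans δ⟧ : Path.Homotopic.Quotient a c) = Path.Homotopic.Quotient.trans ⟦γ⟧ ⟦δ⟧ := rfl

lemma map_lift' {Y : Type*} [TopologicalSpace Y] {a b : X} (P₀ : Path a b) (f : C(X, Y)) :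
    (⟦P₀.map f.continuous⟧ : Path.Homotopic.Quotient (f a) (f b)) =
      Path.Homotopic.Quotient.map ⟦P₀⟧ f := rfl

lemma comp_refl' {a b : X} (p : Path.Homotopic.Quotient a b) :
    p.trans ⟦Path.refl b⟧ = p := Category.comp_id (toHom p)

lemma symm_cancel {a b : X} (δ : Path a b) :
    Path.Homotopic.Quotient.trans ⟦δ⟧ ⟦δ.symm⟧ = (⟦Path.refl a⟧ : Path.Homotopic.Quotient a a) :=
  (Quotient.sound ⟨Path.Homotopy.reflTransSymm δ⟩ :
    (⟦Path.refl a⟧ : Path.Homotopic.Quotient a a) = ⟦δ.trans δ.symm⟧).symm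

lemma comp_left_cancel {a b c : X} (p : Path.Homotopic.Quotient a b)
    {q r : Path.Homotopic.Quotient b c} (h : p.trans q = p.trans r) : q = r := by
  have h' : toHom p ≫ toHom q = toHom p ≫ toHom r := h
  rwa [cancel_epi] at h'

lemma comp_assoc' {a b c d : X} (p : Path.Homotopic.Quotient a b)
    (q : Path.Homotopic.Quotient b c) (r : Path.Homotopic.Quotient c d) :
    (p.trans q).trans r = p.trans (q.trans r) :=
  Category.assoc (toHom p) (toHom q) (toHom r)

variable {x₀ : X}

lemma self_mem_whiskerBall (p : PathSpace X x₀) {U : Set X} (hp : p.1 ∈ U) :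
    p ∈ whiskerBall p U :=
  ⟨Path.refl p.1, by rw [Path.refl_range]; simpa using hp, (comp_refl' p.2).symm⟩

lemma endpoint_mem {p q : PathSpace X x₀} {U : Set X} (h : q ∈ whiskerBall p U) : q.1 ∈ U := by
  obtain ⟨γ, hγ, -⟩ := h
  simpa using hγ ⟨1, γ.target⟩

lemma whiskerBall_mono {p : PathSpace X x₀} {U V : Set X} (h : U ⊆ V) :
    whiskerBall p U ⊆ whiskerBall p V := fun q ⟨γ, hγ, hq⟩ => ⟨γ, hγ.trans h, hq⟩

lemma whiskerBall_subset {p q : PathSpace X x₀} {U : Set X} (h : q ∈ whiskerBall p U) :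
    whiskerBall q U ⊆ whiskerBall p U := by
  obtain ⟨γ, hγ, hq⟩ := h
  rintro r ⟨δ, hδ, hr⟩
  refine ⟨γ.trans δ, ?_, ?_⟩
  · rw [Path.trans_range]; exact union_subset hγ hδ
  · erw [hr, hq, comp_assoc', ← comp_lift']

lemma whiskerBasis (x₀ : X) :
    @TopologicalSpace.IsTopologicalBasis (PathSpace X x₀) (whiskerTopology x₀)
      {S | ∃ (p : PathSpace X x₀) (U : Set X), IsOpen U ∧ p.1 ∈ U ∧ S = whiskerBall p U} := by
  letI := whiskerTopology x₀
  refine ⟨?_, ?_, rfl⟩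
  · rintro S₁ ⟨p, U, hU, hpU, rfl⟩ S₂ ⟨q, V, hV, hqV, rfl⟩ r ⟨hr₁, hr₂⟩
    refine ⟨whiskerBall r (U ∩ V), ⟨r, U ∩ V, hU.inter hV, ⟨endpoint_mem hr₁, endpoint_mem hr₂⟩, rfl⟩,
      self_mem_whiskerBall r ⟨endpoint_mem hr₁, endpoint_mem hr₂⟩, ?_⟩
    intro s hs
    exact ⟨whiskerBall_subset hr₁ (whiskerBall_mono inter_subset_left hs),
      whiskerBall_subset hr₂ (whiskerBall_mono inter_subset_right hs)⟩
  · refine eq_univ_of_forall fun p => ?_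
    exact ⟨whiskerBall p univ, ⟨p, univ, isOpen_univ, mem_univ _, rfl⟩, self_mem_whiskerBall p (mem_univ _)⟩

end Helpers

section ImageLemma
open CategoryTheory
attribute [local instance] Path.Homotopic.setoid

lemma mem_imageSubgroup_iff {U : Set X} {x : X} (hx : x ∈ U) (g : FundamentalGroup X x) :
    g ∈ imageSubgroup U x hx ↔
      ∃ ℓ : Path x x, Set.range ℓ ⊆ U ∧
        g = (⟦ℓ⟧ : Path.Homotopic.Quotient x x) := by
  constructor
  · rintro ⟨h, rfl⟩
    obtain ⟨ℓ₀, hℓ₀⟩ := Quotient.exists_rep h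
    refine ⟨ℓ₀.map continuous_subtype_val, ?_, ?_⟩
    · rintro - ⟨t, rfl⟩; exact (ℓ₀ t).2
    · show (FundamentalGroupoid.fundamentalGroupoidFunctor.map
          (X := TopCat.of U) (Y := TopCat.of X)
          (TopCat.ofHom ⟨Subtype.val, continuous_subtype_val⟩)).map h = _
      rw [← hℓ₀]
      exact (map_lift' ℓ₀ ⟨Subtype.val, continuous_subtype_val⟩).symm
  · rintro ⟨ℓ, hr, hg⟩
    let ℓ' : Path (⟨x, hx⟩ : U) ⟨x, hx⟩ :=
      { toFun := fun t => ⟨ℓ t, hr (Set.mem_range_self t)⟩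
        continuous_toFun := ℓ.continuous.subtype_mk _
        source' := Subtype.ext ℓ.source
        target' := Subtype.ext ℓ.target }
    refine ⟨(⟦ℓ'⟧ : Path.Homotopic.Quotient _ _), ?_⟩
    show (FundamentalGroupoid.fundamentalGroupoidFunctor.map
          (X := TopCat.of U) (Y := TopCat.of X)
          (TopCat.ofHom ⟨Subtype.val, continuous_subtype_val⟩)).map
        (⟦ℓ'⟧ : Path.Homotopic.Quotient (⟨x, hx⟩ : U) ⟨x, hx⟩) = g
    rw [hg]
    have h1 : ℓ'.map continuous_subtype_val = ℓ := by ext t; rfl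
    have h2 : (⟦ℓ'.map continuous_subtype_val⟧ : Path.Homotopic.Quotient x x) = ⟦ℓ⟧ := by
      rw [h1]
    exact (map_lift' ℓ' ⟨Subtype.val, continuous_subtype_val⟩).symm.trans h2

end ImageLemma

section Main
open CategoryTheory
attribute [local instance] Path.Homotopic.setoid

lemma one_hom_eq (x : X) :
    (1 : FundamentalGroup X x) = (⟦Path.refl x⟧ : Path.Homotopic.Quotient x x) := rfl

lemma iInf_imageSubgroup_eq_bot_iff (x : X) :
    (⨅ (U : Set X) (_ : IsOpen U) (hx : x ∈ U), imageSubgroup U x hx) = ⊥ ↔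
      ∀ a : Path.Homotopic.Quotient x x, a ≠ ⟦Path.refl x⟧ →
        ∃ U : Set X, IsOpen U ∧ x ∈ U ∧
          ∀ ℓ : Path x x, Set.range ℓ ⊆ U → a ≠ (⟦ℓ⟧ : Path.Homotopic.Quotient x x) := by
  constructor
  · intro h a ha
    by_contra hc
    have hc' : ∀ U : Set X, IsOpen U → x ∈ U →
        ∃ ℓ : Path x x, Set.range ℓ ⊆ U ∧ a = (⟦ℓ⟧ : Path.Homotopic.Quotient x x) := by
      intro U hU hx
      by_contra h2
      exact hc ⟨U, hU, hx, fun ℓ hr hal => h2 ⟨ℓ, hr, hal⟩⟩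
    set g : FundamentalGroup X x :=
      (toHom a) with hgdef
    have hghom : g = a := rfl
    have hmem : g ∈ (⨅ (U : Set X) (_ : IsOpen U) (hx : x ∈ U), imageSubgroup U x hx) := by
      simp only [Subgroup.mem_iInf]
      intro U hU hx
      obtain ⟨ℓ, hrl, hal⟩ := hc' U hU hx
      exact (mem_imageSubgroup_iff hx g).2 ⟨ℓ, hrl, hghom.trans hal⟩
    rw [h, Subgroup.mem_bot] at hmem
    exact ha (hghom.symm.trans (by rw [hmem]; rfl))
  · intro h
    rw [eq_bot_iff]
    intro g hg
    simp only [Subgroup.mem_iInf] at hg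
    rw [Subgroup.mem_bot]
    by_contra hne
    have ha : g ≠ (⟦Path.refl x⟧ : Path.Homotopic.Quotient x x) :=
      fun he => hne (he.trans (one_hom_eq x).symm)
    obtain ⟨U, hU, hxU, hloop⟩ := h g ha
    obtain ⟨ℓ, hrl, hgl⟩ := (mem_imageSubgroup_iff hxU g).1 (hg U hU hxU)
    exact hloop ℓ hrl hgl

/-- For a path connected Hausdorff space `X`, the space `X̃` with the whisker topology is
Hausdorff iff `X` is homotopically Hausdorff. -/
theorem pathSpace_t2_iff_homotopicallyHausdorff [T2Space X] [PathConnectedSpace X] (x₀ : X) :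
    @T2Space (PathSpace X x₀) (whiskerTopology x₀) ↔
      ∀ x : X, (⨅ (U : Set X) (_ : IsOpen U) (hx : x ∈ U), imageSubgroup U x hx) = ⊥ := by
  letI := whiskerTopology x₀
  constructor
  · intro hT2 x
    haveI := hT2
    rw [iInf_imageSubgroup_eq_bot_iff]
    intro a ha
    set α : Path x₀ x := PathConnectedSpace.somePath x₀ x with hα
    set p : PathSpace X x₀ := ⟨x, ⟦α⟧⟩ with hp
    set q : PathSpace X x₀ := ⟨x, Path.Homotopic.Quotient.trans ⟦α⟧ a⟩ with hq
    have hpq : p ≠ q := by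
      intro he
      have h2 : (⟦α⟧ : Path.Homotopic.Quotient x₀ x) = Path.Homotopic.Quotient.trans ⟦α⟧ a := by
        exact eq_of_heq (Sigma.ext_iff.1 he).2
      have h3 : Path.Homotopic.Quotient.trans ⟦α⟧ (⟦Path.refl x⟧ : Path.Homotopic.Quotient x x)
          = Path.Homotopic.Quotient.trans ⟦α⟧ a := by erw [comp_refl']; exact h2
      exact ha (comp_left_cancel _ h3.symm)
    obtain ⟨A, B, hA, hB, hpA, hqB, hAB⟩ := t2_separation hpq
    obtain ⟨S₁, hS₁, hpS, hSA⟩ := (whiskerBasis x₀).exists_subset_of_mem_open hpA hA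
    obtain ⟨p', U, hU, hpU, rfl⟩ := hS₁
    obtain ⟨S₂, hS₂, hqS, hSB⟩ := (whiskerBasis x₀).exists_subset_of_mem_open hqB hB
    obtain ⟨q', V, hV, hqV, rfl⟩ := hS₂
    refine ⟨U ∩ V, hU.inter hV, ⟨endpoint_mem hpS, endpoint_mem hqS⟩, ?_⟩
    intro ℓ hrl hal
    have hqball : q ∈ whiskerBall p (U ∩ V) := ⟨ℓ, hrl, by rw [← hal]⟩
    have h1 : q ∈ A :=
      hSA (whiskerBall_subset hpS (whiskerBall_mono inter_subset_left hqball))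
    exact Set.disjoint_left.1 hAB h1 (hSB hqS)
  · intro hH
    refine { t2 := fun p q hpq => ?_ }
    by_cases hend : p.1 = q.1
    · obtain ⟨y, c⟩ := p
      obtain ⟨y', c'⟩ := q
      dsimp at hend
      subst hend
      have hcc : c ≠ c' := fun h => hpq (by rw [h])
      set a : Path.Homotopic.Quotient y y :=
        (Groupoid.inv (toHom c) ≫ toHom c' : FundamentalGroupoid.mk y ⟶ FundamentalGroupoid.mk y)
        with hadef
      have hca : c.trans a = c' := by
        show toHom c ≫ (Groupoid.inv (toHom c) ≫ toHom c') = toHom c'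
        rw [← Category.assoc, Groupoid.comp_inv, Category.id_comp]
      have ha : a ≠ (⟦Path.refl y⟧ : Path.Homotopic.Quotient y y) := by
        intro h
        exact hcc (by rw [← hca, h, comp_refl'])
      obtain ⟨U, hU, hyU, hloop⟩ := (iInf_imageSubgroup_eq_bot_iff y).1 (hH y) a ha
      refine ⟨whiskerBall ⟨y, c⟩ U, whiskerBall ⟨y, c'⟩ U,
        (whiskerBasis x₀).isOpen ⟨⟨y, c⟩, U, hU, hyU, rfl⟩,
        (whiskerBasis x₀).isOpen ⟨⟨y, c'⟩, U, hU, hyU, rfl⟩,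
        self_mem_whiskerBall _ hyU, self_mem_whiskerBall _ hyU, ?_⟩
      rw [Set.disjoint_left]
      rintro r ⟨γ, hγ, hr⟩ ⟨δ, hδ, hr'⟩
      have he : c.trans ⟦γ⟧ = c'.trans ⟦δ⟧ := hr.symm.trans hr'
      have he2 : c.trans (Path.Homotopic.Quotient.trans ⟦γ⟧ ⟦δ.symm⟧) = c' := by
        erw [← comp_assoc', he, comp_assoc', symm_cancel, comp_refl']
      have ha2 : a = Path.Homotopic.Quotient.trans ⟦γ⟧ ⟦δ.symm⟧ :=
        comp_left_cancel c (hca.trans he2.symm)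
      refine hloop (γ.trans δ.symm) ?_ (ha2.trans (comp_lift' γ δ.symm).symm)
      rw [Path.trans_range, Path.symm_range]
      exact union_subset hγ hδ
    · obtain ⟨U, V, hU, hV, h1, h2, hd⟩ := t2_separation hend
      refine ⟨whiskerBall p U, whiskerBall q V,
        (whiskerBasis x₀).isOpen ⟨p, U, hU, h1, rfl⟩,
        (whiskerBasis x₀).isOpen ⟨q, V, hV, h2, rfl⟩,
        self_mem_whiskerBall p h1, self_mem_whiskerBall q h2, ?_⟩
      rw [Set.disjoint_left]
      intro r hr hr'
      exact Set.disjoint_left.1 hd (endpoint_mem hr) (endpoint_mem hr')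

end Main
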